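/- Suppose the set of inverse Nash equilibria of an inverse game (G \ θ*, x̂) is nonempty. Then a parameter θ ∈ Θ is an inverse Nash equilibrium (i.e., x̂ is a Nash equilibrium of G_θ) if and only if θ minimizes over Θ the function θ ↦ max_{y ∈ X} Σ_i [u_i(y_i, x̂_{-i}; θ) - u_i(x̂; θ)], and the minimum value is zero. -/
import Mathlib


/-- `θ` is an inverse Nash equilibrium: the observed profile `xhat` is a Nash equilibrium of
the game with payoffs `u · (·; θ)`. -/
def IsInverseNash {N : ℕ} {E Θ : Type*} (X : Fin N → Set E)
    (u : Fin N → (Fin N → E) → Θ → ℝ) (xhat : Fin N → E) (θ : Θ) : Prop :=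
  ∀ i, ∀ yᵢ ∈ X i, u i (Function.update xhat i yᵢ) θ ≤ u i xhat θ

/-- If the set of inverse Nash equilibria of the inverse game is nonempty, then
`θ` is an inverse Nash equilibrium iff `θ` minimizes the exploitability function
`θ ↦ max_{y ∈ X} ∑ i (u i (yᵢ, xhat₋ᵢ; θ) - u i (xhat; θ))`, and the minimum value is zero.
The per-parameter maximum is assumed attained, encoded by `IsGreatest` into `expl θ`. -/
theorem inverseNash_iff_minimizes_exploitability {N : ℕ} {E Θ : Type*}
    (X : Fin N → Set E) (u : Fin N → (Fin N → E) → Θ → ℝ)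
    (xhat : Fin N → E) (hxhat : ∀ i, xhat i ∈ X i)
    (expl : Θ → ℝ)
    (hexpl : ∀ θ : Θ, IsGreatest
      ((fun y : Fin N → E =>
          ∑ i, (u i (Function.update xhat i (y i)) θ - u i xhat θ)) ''
        {y : Fin N → E | ∀ i, y i ∈ X i}) (expl θ))
    (hne : ∃ θ₀ : Θ, IsInverseNash X u xhat θ₀) :
    (∀ θ : Θ, IsInverseNash X u xhat θ ↔ ∀ θ' : Θ, expl θ ≤ expl θ') ∧
      IsLeast (Set.range expl) 0 := by
  -- expl θ ≥ 0 always (take y = xhat)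
  have hnonneg : ∀ θ, 0 ≤ expl θ := by
    intro θ
    have := (hexpl θ).1
    have h0 : (∑ i, (u i (Function.update xhat i (xhat i)) θ - u i xhat θ)) = 0 := by
      apply Finset.sum_eq_zero
      intro i _
      rw [Function.update_eq_self]
      ring
    have : (∑ i, (u i (Function.update xhat i (xhat i)) θ - u i xhat θ)) ≤ expl θ :=
      (hexpl θ).2 (Set.mem_image_of_mem _ (show xhat ∈ {y : Fin N → E | ∀ i, y i ∈ X i} from hxhat))
    linarith
  -- Nash ↔ expl θ = 0
  have hiff : ∀ θ, IsInverseNash X u xhat θ ↔ expl θ = 0 := by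
    intro θ
    constructor
    · intro hNash
      refine le_antisymm ?_ (hnonneg θ)
      rcases (hexpl θ).1 with ⟨y, hy, hval⟩
      rw [← hval]
      apply Finset.sum_nonpos
      intro i _
      have := hNash i (y i) (hy i)
      linarith
    · intro h0 i yᵢ hyᵢ
      set y : Fin N → E := Function.update xhat i yᵢ with hy
      have hymem : y ∈ {z : Fin N → E | ∀ j, z j ∈ X j} := by
        intro j
        by_cases hji : j = i
        · subst hji; simpa [hy] using hyᵢ
        · simpa [hy, Function.update_of_ne hji] using hxhat j
      have hle : (∑ j, (u j (Function.update xhat j (y j)) θ - u j xhat θ)) ≤ expl θ :=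
        (hexpl θ).2 (Set.mem_image_of_mem _ hymem)
      have hsum : (∑ j, (u j (Function.update xhat j (y j)) θ - u j xhat θ))
          = u i (Function.update xhat i yᵢ) θ - u i xhat θ := by
        rw [Finset.sum_eq_single i]
        · simp [hy]
        · intro j _ hji
          rw [hy, Function.update_of_ne hji, Function.update_eq_self]
          ring
        · simp
      rw [hsum, h0] at hle
      linarith
  obtain ⟨θ₀, hθ₀⟩ := hne
  have hθ₀0 : expl θ₀ = 0 := (hiff θ₀).1 hθ₀
  constructor
  · intro θ
    rw [hiff θ]
    constructor
    · intro h0 θ'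
      rw [h0]; exact hnonneg θ'
    · intro hmin
      exact le_antisymm (hθ₀0 ▸ hmin θ₀) (hnonneg θ)
  · exact ⟨⟨θ₀, hθ₀0⟩, by rintro r ⟨θ, rfl⟩; exact hnonneg θ⟩
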